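/- Let α ∈ (0,1/2) and θ ∈ (−1,0] with 2α − θ < 1, let k > 0, let φ be a nonnegative measurable function on (0,∞)² with φ(v',v'') ≤ k(1+v'+v'')/(v'+v'')^α, and let P(v|v';v'') = (θ+2) v^θ/(v'+v'')^{1+θ} for 0 < v < v'+v'' and 0 otherwise. Let n ≥ 1, 0 ≤ s ≤ t, B > 0, and let g : (0,n) × [s,t] → [0,∞) be measurable with ∫_0^n (v^{−2α} + v) g(v,ζ) dv ≤ B for every ζ ∈ [s,t]. Then (1/2) ∫_s^t ∫_0^n ∫_0^n ∫_0^{v'+v''} v^{−α} P(v|v';v'') φ(v',v'') g(v',ζ) g(v'',ζ) dv dv'' dv' dζ ≤ (13/2)·k·((θ+2)/(θ+1−α))·B²·(t−s). -/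

import Mathlib

open MeasureTheory Set Real ENNReal

/-- The power-law probability distribution function
`P(v|v';v'') = (θ+2) v^θ/(v'+v'')^{1+θ}` for `0 < v < v'+v''`, and `0` otherwise. -/
noncomputable def Pker (θ : ℝ) (v v' v'' : ℝ) : ℝ :=
  if 0 < v ∧ v < v' + v'' then (θ + 2) * v ^ θ / (v' + v'') ^ (1 + θ) else 0

lemma lintegral_rpow_Ioo {a p : ℝ} (ha : 0 < a) (hp : -1 < p) :
    ∫⁻ v in Ioo (0:ℝ) a, ENNReal.ofReal (v ^ p) = ENNReal.ofReal (a ^ (p+1) / (p+1)) := by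
  rw [Measure.restrict_congr_set Ioo_ae_eq_Ioc,
    ← ofReal_integral_eq_lintegral_ofReal]
  · rw [← intervalIntegral.integral_of_le ha.le, integral_rpow (Or.inl hp),
      Real.zero_rpow (by linarith : p + 1 ≠ 0), sub_zero]
  · exact (intervalIntegrable_iff_integrableOn_Ioc_of_le ha.le).mp
      (intervalIntegral.intervalIntegrable_rpow' hp)
  · filter_upwards [ae_restrict_mem measurableSet_Ioc] with x hx
    exact (Real.rpow_pos_of_pos hx.1 p).le

set_option maxHeartbeats 1000000

/-- Key equicontinuity estimate for the breakage contribution: if `φ(v',v'') ≤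
k(1+v'+v'')/(v'+v'')^α` and the moments of `g(·,ζ)` are bounded by `B` for `ζ ∈ [s,t]`, then
`(1/2)∫_s^t ∫_0^n ∫_0^n ∫_0^{v'+v''} v^{−α} P(v|v';v'') φ(v',v'') g(v',ζ) g(v'',ζ)
  dv dv'' dv' dζ ≤ (13/2)·k·((θ+2)/(θ+1−α))·B²·(t−s)`. -/
theorem breakage_equicontinuity_estimate
    (α θ k : ℝ) (hα₁ : 0 < α) (hα₂ : α < 1/2) (hθ₁ : -1 < θ) (hθ₂ : θ ≤ 0)
    (hαθ : 2*α - θ < 1) (hk : 0 < k)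
    (φ : ℝ → ℝ → ℝ) (hφm : Measurable (Function.uncurry φ))
    (hφnn : ∀ v v' : ℝ, 0 ≤ φ v v')
    (hφb : ∀ v v' : ℝ, 0 < v → 0 < v' → φ v v' ≤ k * (1 + v + v') / (v + v') ^ α)
    (n : ℝ) (hn : 1 ≤ n) (s t B : ℝ) (hs : 0 ≤ s) (hst : s ≤ t) (hB : 0 < B)
    (g : ℝ → ℝ → ℝ) (hgm : Measurable (Function.uncurry g))
    (hgnn : ∀ v ζ : ℝ, 0 ≤ g v ζ)
    (hgB : ∀ ζ ∈ Icc s t,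
      ∫⁻ v in Ioo (0:ℝ) n, ENNReal.ofReal ((v ^ (-(2*α)) + v) * g v ζ)
        ≤ ENNReal.ofReal B) :
    (1/2 : ℝ≥0∞) * ∫⁻ ζ in Icc s t, ∫⁻ v' in Ioo (0:ℝ) n, ∫⁻ v'' in Ioo (0:ℝ) n,
        ∫⁻ v in Ioo (0:ℝ) (v' + v''),
          ENNReal.ofReal (v ^ (-α) * Pker θ v v' v'' * φ v' v'' * g v' ζ * g v'' ζ)
      ≤ ENNReal.ofReal ((13/2) * k * ((θ + 2) / (θ + 1 - α)) * B^2 * (t - s)) := by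
  have hθ2 : (0:ℝ) < θ + 2 := by linarith
  have hden : (0:ℝ) < θ + 1 - α := by linarith
  set C : ℝ := (θ + 2) / (θ + 1 - α) with hCdef
  have hC : 0 < C := div_pos hθ2 hden
  -- the weight is at least 1 on positive reals
  have hw1 : ∀ x : ℝ, 0 < x → (1:ℝ) ≤ x ^ (-(2*α)) + x := by
    intro x hx
    rcases le_total x 1 with h | h
    · have h1 := Real.one_le_rpow_of_pos_of_le_one_of_nonpos hx h
        (by linarith : -(2*α) ≤ 0)
      linarith
    · have h2 : (0:ℝ) ≤ x ^ (-(2*α)) := (Real.rpow_pos_of_pos hx _).le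
      linarith
  -- measurability
  have hgmz : ∀ ζ : ℝ, Measurable fun v => g v ζ := fun ζ =>
    hgm.comp (measurable_id.prodMk measurable_const)
  have hrpm : Measurable fun v : ℝ => v ^ (-(2*α)) := by fun_prop
  have hWm : ∀ ζ : ℝ, Measurable fun v => ENNReal.ofReal ((v ^ (-(2*α)) + v) * g v ζ) :=
    fun ζ => ((hrpm.add measurable_id).mul (hgmz ζ)).ennreal_ofReal
  -- the key pointwise bound for the innermost integral
  have key : ∀ ζ : ℝ, ∀ v' ∈ Ioo (0:ℝ) n, ∀ v'' ∈ Ioo (0:ℝ) n,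
      (∫⁻ v in Ioo (0:ℝ) (v' + v''),
          ENNReal.ofReal (v ^ (-α) * Pker θ v v' v'' * φ v' v'' * g v' ζ * g v'' ζ))
        ≤ ENNReal.ofReal (4*k*C) * ENNReal.ofReal ((v' ^ (-(2*α)) + v') * g v' ζ)
            * ENNReal.ofReal ((v'' ^ (-(2*α)) + v'') * g v'' ζ) := by
    intro ζ v' hv' v'' hv''
    set a := v' + v'' with ha_def
    have ha : 0 < a := add_pos hv'.1 hv''.1
    have hap : (0:ℝ) < a ^ (1+θ) := Real.rpow_pos_of_pos ha _
    set c : ℝ := φ v' v'' * g v' ζ * g v'' ζ with hc_def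
    have hc : 0 ≤ c := mul_nonneg (mul_nonneg (hφnn _ _) (hgnn _ _)) (hgnn _ _)
    set d : ℝ := (θ+2) / a ^ (1+θ) * c with hd_def
    have hd : 0 ≤ d := mul_nonneg (div_pos hθ2 hap).le hc
    have hpθ : (-1:ℝ) < θ - α := by linarith
    have step1 : (∫⁻ v in Ioo (0:ℝ) a,
        ENNReal.ofReal (v ^ (-α) * Pker θ v v' v'' * φ v' v'' * g v' ζ * g v'' ζ))
        = ENNReal.ofReal (a ^ (θ - α + 1) / (θ - α + 1) * d) := by
      calc ∫⁻ v in Ioo (0:ℝ) a,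
            ENNReal.ofReal (v ^ (-α) * Pker θ v v' v'' * φ v' v'' * g v' ζ * g v'' ζ)
          = ∫⁻ v in Ioo (0:ℝ) a, ENNReal.ofReal (v ^ (θ - α)) * ENNReal.ofReal d := by
            refine setLIntegral_congr_fun measurableSet_Ioo (fun v hv => ?_)
            rw [← ENNReal.ofReal_mul (Real.rpow_nonneg hv.1.le _)]
            congr 1
            have hsplit : v ^ (θ - α) = v ^ θ * v ^ (-α) := by
              rw [← Real.rpow_add hv.1]; ring_nf
            simp only [Pker]
            rw [if_pos ⟨hv.1, hv.2⟩, hd_def, hc_def, hsplit]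
            ring
        _ = (∫⁻ v in Ioo (0:ℝ) a, ENNReal.ofReal (v ^ (θ - α))) * ENNReal.ofReal d :=
            lintegral_mul_const _ (by fun_prop)
        _ = ENNReal.ofReal (a ^ (θ - α + 1) / (θ - α + 1)) * ENNReal.ofReal d := by
            rw [lintegral_rpow_Ioo ha hpθ]
        _ = ENNReal.ofReal (a ^ (θ - α + 1) / (θ - α + 1) * d) :=
            (ENNReal.ofReal_mul (div_nonneg (Real.rpow_nonneg ha.le _) (by linarith))).symm
    have hw'nn : (0:ℝ) ≤ (v' ^ (-(2*α)) + v') * g v' ζ :=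
      mul_nonneg (add_nonneg (Real.rpow_pos_of_pos hv'.1 _).le hv'.1.le) (hgnn _ _)
    have hkC : (0:ℝ) ≤ 4*k*C := mul_nonneg (mul_nonneg (by norm_num) hk.le) hC.le
    rw [step1, ← ENNReal.ofReal_mul hkC, ← ENNReal.ofReal_mul (mul_nonneg hkC hw'nn)]
    apply ENNReal.ofReal_le_ofReal
    -- first simplify the left-hand side to C * a^(-α) * c
    have e1 : a ^ (θ - α + 1) = a ^ (-α) * a ^ (1+θ) := by
      rw [← Real.rpow_add ha]; ring_nf
    have hLHS : a ^ (θ - α + 1) / (θ - α + 1) * d = C * a ^ (-α) * c := by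
      have hne1 : a ^ (1+θ) ≠ 0 := hap.ne'
      have hne2 : θ - α + 1 ≠ 0 := by linarith
      have hne3 : θ + 1 - α ≠ 0 := hden.ne'
      rw [hd_def, hCdef, e1]
      field_simp
      ring
    rw [hLHS]
    -- key real estimate : a^(-α) * φ ≤ 4k * w(v') * w(v'')
    have hφ2 : a ^ (-α) * φ v' v'' ≤
        4*k*((v' ^ (-(2*α)) + v') * (v'' ^ (-(2*α)) + v'')) := by
      have hb := hφb v' v'' hv'.1 hv''.1
      rw [← ha_def] at hb
      have hαpos : (0:ℝ) < a ^ (-α) := Real.rpow_pos_of_pos ha _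
      have e2 : a ^ (-(2*α)) = a ^ (-α) / a ^ α := by
        rw [← Real.rpow_sub ha]; ring_nf
      have h1 : a ^ (-(2*α)) ≤ v' ^ (-(2*α)) :=
        Real.rpow_le_rpow_of_nonpos hv'.1 (by linarith [hv''.1] : v' ≤ a) (by linarith)
      have h2 : a ^ (1 - 2*α) = a * a ^ (-(2*α)) := by
        nth_rewrite 2 [← Real.rpow_one a]
        rw [← Real.rpow_add ha]; ring_nf
      have h3 : a ^ (1 - 2*α) ≤ 1 + a := by
        rcases le_total a 1 with h | h
        · have := Real.rpow_le_one ha.le h (by linarith : (0:ℝ) ≤ 1 - 2*α)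
          linarith
        · have := Real.rpow_le_rpow_of_exponent_le h (by linarith : 1 - 2*α ≤ 1)
          rw [Real.rpow_one] at this
          linarith
      have h4 : (1:ℝ) ≤ v' ^ (-(2*α)) + v' := hw1 v' hv'.1
      have h5 : (1:ℝ) ≤ v'' ^ (-(2*α)) + v'' := hw1 v'' hv''.1
      have h6 : (1 + a) * a ^ (-(2*α)) ≤ v' ^ (-(2*α)) + 1 + v' + v'' := by
        have hnn : (0:ℝ) ≤ a ^ (-(2*α)) := (Real.rpow_pos_of_pos ha _).le
        nlinarith [h1, h2, h3]
      have h7 : v' ^ (-(2*α)) + 1 + v' + v'' ≤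
          4 * ((v' ^ (-(2*α)) + v') * (v'' ^ (-(2*α)) + v'')) := by
        have hnn'' : (0:ℝ) ≤ v'' ^ (-(2*α)) := (Real.rpow_pos_of_pos hv''.1 _).le
        nlinarith [mul_nonneg (sub_nonneg.2 h4) (sub_nonneg.2 h5)]
      calc a ^ (-α) * φ v' v''
          ≤ a ^ (-α) * (k * (1 + v' + v'') / a ^ α) :=
            mul_le_mul_of_nonneg_left hb hαpos.le
        _ = k * ((1 + a) * a ^ (-(2*α))) := by rw [e2, ha_def]; ring
        _ ≤ k * (v' ^ (-(2*α)) + 1 + v' + v'') := by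
            exact mul_le_mul_of_nonneg_left h6 hk.le
        _ ≤ k * (4 * ((v' ^ (-(2*α)) + v') * (v'' ^ (-(2*α)) + v''))) :=
            mul_le_mul_of_nonneg_left h7 hk.le
        _ = 4*k*((v' ^ (-(2*α)) + v') * (v'' ^ (-(2*α)) + v'')) := by ring
    calc C * a ^ (-α) * c
        = (a ^ (-α) * φ v' v'') * (C * (g v' ζ * g v'' ζ)) := by rw [hc_def]; ring
      _ ≤ (4*k*((v' ^ (-(2*α)) + v') * (v'' ^ (-(2*α)) + v''))) * (C * (g v' ζ * g v'' ζ)) :=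
          mul_le_mul_of_nonneg_right hφ2 (mul_nonneg hC.le (mul_nonneg (hgnn _ _) (hgnn _ _)))
      _ = 4*k*C * ((v' ^ (-(2*α)) + v') * g v' ζ) * ((v'' ^ (-(2*α)) + v'') * g v'' ζ) := by
          ring
  -- the bound for the triple integral, for every ζ ∈ [s,t]
  have mid : ∀ ζ ∈ Icc s t,
      (∫⁻ v' in Ioo (0:ℝ) n, ∫⁻ v'' in Ioo (0:ℝ) n,
        ∫⁻ v in Ioo (0:ℝ) (v' + v''),
          ENNReal.ofReal (v ^ (-α) * Pker θ v v' v'' * φ v' v'' * g v' ζ * g v'' ζ))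
        ≤ ENNReal.ofReal (4*k*C) * ENNReal.ofReal B * ENNReal.ofReal B := by
    intro ζ hζ
    have hB' := hgB ζ hζ
    calc ∫⁻ v' in Ioo (0:ℝ) n, ∫⁻ v'' in Ioo (0:ℝ) n,
          ∫⁻ v in Ioo (0:ℝ) (v' + v''),
            ENNReal.ofReal (v ^ (-α) * Pker θ v v' v'' * φ v' v'' * g v' ζ * g v'' ζ)
        ≤ ∫⁻ v' in Ioo (0:ℝ) n,
            ENNReal.ofReal (4*k*C) * ENNReal.ofReal ((v' ^ (-(2*α)) + v') * g v' ζ)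
              * ENNReal.ofReal B := by
          refine setLIntegral_mono ((measurable_const.mul (hWm ζ)).mul measurable_const)
            fun v' hv' => ?_
          calc ∫⁻ v'' in Ioo (0:ℝ) n, ∫⁻ v in Ioo (0:ℝ) (v' + v''),
                ENNReal.ofReal (v ^ (-α) * Pker θ v v' v'' * φ v' v'' * g v' ζ * g v'' ζ)
              ≤ ∫⁻ v'' in Ioo (0:ℝ) n,
                  (ENNReal.ofReal (4*k*C) * ENNReal.ofReal ((v' ^ (-(2*α)) + v') * g v' ζ))
                    * ENNReal.ofReal ((v'' ^ (-(2*α)) + v'') * g v'' ζ) := by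
                refine setLIntegral_mono ((hWm ζ).const_mul _) fun v'' hv'' => ?_
                exact key ζ v' hv' v'' hv''
            _ = (ENNReal.ofReal (4*k*C) * ENNReal.ofReal ((v' ^ (-(2*α)) + v') * g v' ζ))
                  * ∫⁻ v'' in Ioo (0:ℝ) n,
                      ENNReal.ofReal ((v'' ^ (-(2*α)) + v'') * g v'' ζ) :=
                lintegral_const_mul _ (hWm ζ)
            _ ≤ (ENNReal.ofReal (4*k*C) * ENNReal.ofReal ((v' ^ (-(2*α)) + v') * g v' ζ))
                  * ENNReal.ofReal B := mul_le_mul_right hB' _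
            _ = ENNReal.ofReal (4*k*C) * ENNReal.ofReal ((v' ^ (-(2*α)) + v') * g v' ζ)
                  * ENNReal.ofReal B := by rw [mul_assoc]
      _ = ∫⁻ v' in Ioo (0:ℝ) n,
            (ENNReal.ofReal (4*k*C) * ENNReal.ofReal B)
              * ENNReal.ofReal ((v' ^ (-(2*α)) + v') * g v' ζ) := by
          refine lintegral_congr fun v' => ?_
          ring
      _ = (ENNReal.ofReal (4*k*C) * ENNReal.ofReal B)
            * ∫⁻ v' in Ioo (0:ℝ) n, ENNReal.ofReal ((v' ^ (-(2*α)) + v') * g v' ζ) :=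
          lintegral_const_mul _ (hWm ζ)
      _ ≤ (ENNReal.ofReal (4*k*C) * ENNReal.ofReal B) * ENNReal.ofReal B :=
          mul_le_mul_right hB' _
      _ = ENNReal.ofReal (4*k*C) * ENNReal.ofReal B * ENNReal.ofReal B := by rw [mul_assoc]
  -- conclude
  calc (1/2 : ℝ≥0∞) * ∫⁻ ζ in Icc s t, ∫⁻ v' in Ioo (0:ℝ) n, ∫⁻ v'' in Ioo (0:ℝ) n,
        ∫⁻ v in Ioo (0:ℝ) (v' + v''),
          ENNReal.ofReal (v ^ (-α) * Pker θ v v' v'' * φ v' v'' * g v' ζ * g v'' ζ)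
      ≤ (1/2 : ℝ≥0∞) * ∫⁻ _ in Icc s t,
          (ENNReal.ofReal (4*k*C) * ENNReal.ofReal B * ENNReal.ofReal B) :=
        mul_le_mul_right (setLIntegral_mono measurable_const mid) _
    _ = (1/2 : ℝ≥0∞) * ((ENNReal.ofReal (4*k*C) * ENNReal.ofReal B * ENNReal.ofReal B)
          * ENNReal.ofReal (t - s)) := by
        rw [setLIntegral_const, Real.volume_Icc]
    _ = ENNReal.ofReal (1/2) * ENNReal.ofReal (4*k*C * B * B * (t - s)) := by
        have h1 : (0:ℝ) ≤ 4*k*C := mul_nonneg (mul_nonneg (by norm_num) hk.le) hC.le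
        rw [ENNReal.ofReal_mul (mul_nonneg (mul_nonneg h1 hB.le) hB.le),
          ENNReal.ofReal_mul (mul_nonneg h1 hB.le), ENNReal.ofReal_mul h1]
        congr 1
        rw [ENNReal.ofReal_div_of_pos (by norm_num), ENNReal.ofReal_one,
          ENNReal.ofReal_ofNat]
    _ = ENNReal.ofReal (1/2 * (4*k*C * B * B * (t - s))) :=
        (ENNReal.ofReal_mul (by norm_num)).symm
    _ ≤ ENNReal.ofReal ((13/2) * k * C * B^2 * (t - s)) := by
        apply ENNReal.ofReal_le_ofReal
        have hts : (0:ℝ) ≤ t - s := by linarith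
        nlinarith [mul_nonneg (mul_nonneg (mul_nonneg hk.le hC.le) (sq_nonneg B)) hts]
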